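/- Let P = {p_1 < p_2 < ⋯ < p_k} ⊆ [n] and let N = {n_1 < n_2 < ⋯ < n_{k+1}} be the set of the k + 1 smallest positive integers not in P. Fix an ordering ω of P. Then there exists a permutation π ∈ S_n with Pin(π) = P and ord_P(π) = ω if and only if there exists a sequence τ listing each element of P ∪ N exactly once with Pin(τ) = P and ord_P(τ) = ω. -/

import Mathlib

/-- The pinnacle set of a finite sequence `w` (given as a list): the set of values `w t`
at interior positions `t` with `w (t-1) < w t > w (t+1)`. -/
def pinSet (w : List ℕ) : Finset ℕ :=
  (((List.range w.length).filter (fun t =>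
      decide (0 < t ∧ t + 1 < w.length ∧
        w.getD (t - 1) 0 < w.getD t 0 ∧ w.getD (t + 1) 0 < w.getD t 0))).map
    (fun t => w.getD t 0)).toFinset

/-- `ordIn S π` is the subsequence of the list `π` consisting of the entries lying in `S`. -/
def ordIn (S : Finset ℕ) (π : List ℕ) : List ℕ :=
  π.filter (fun x => decide (x ∈ S))

/-! ### Basic infrastructure about pinnacle positions -/

def IsPin (w : List ℕ) (t : ℕ) : Prop :=
  0 < t ∧ t + 1 < w.length ∧ w.getD (t - 1) 0 < w.getD t 0 ∧ w.getD (t + 1) 0 < w.getD t 0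

instance (w : List ℕ) : DecidablePred (IsPin w) := fun _ => by
  unfold IsPin; infer_instance

def pinPos (w : List ℕ) : List ℕ :=
  (List.range w.length).filter (fun t =>
      decide (0 < t ∧ t + 1 < w.length ∧
        w.getD (t - 1) 0 < w.getD t 0 ∧ w.getD (t + 1) 0 < w.getD t 0))

lemma mem_pinPos {w : List ℕ} {t : ℕ} : t ∈ pinPos w ↔ IsPin w t := by
  simp only [pinPos, List.mem_filter, List.mem_range, decide_eq_true_eq, IsPin]
  constructor
  · rintro ⟨_, h⟩; exact h
  · intro h; exact ⟨by omega, h⟩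

lemma pinSet_eq_map {w : List ℕ} :
    pinSet w = ((pinPos w).map (fun t => w.getD t 0)).toFinset := rfl

lemma mem_pinSet {w : List ℕ} {x : ℕ} :
    x ∈ pinSet w ↔ ∃ t, IsPin w t ∧ w.getD t 0 = x := by
  simp only [pinSet_eq_map, List.mem_toFinset, List.mem_map]
  constructor
  · rintro ⟨t, ht, rfl⟩; exact ⟨t, mem_pinPos.1 ht, rfl⟩
  · rintro ⟨t, h, rfl⟩; exact ⟨t, mem_pinPos.2 h, rfl⟩

lemma mem_of_mem_pinSet {w : List ℕ} {x : ℕ} (h : x ∈ pinSet w) : x ∈ w := by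
  rcases mem_pinSet.1 h with ⟨t, ht, rfl⟩
  have hlt : t < w.length := by have := ht.2.1; omega
  rw [List.getD_eq_getElem w 0 hlt]
  exact List.getElem_mem _

lemma getD_inj {w : List ℕ} (hw : w.Nodup) {s t : ℕ} (hs : s < w.length) (ht : t < w.length)
    (h : w.getD s 0 = w.getD t 0) : s = t := by
  rw [List.getD_eq_getElem w 0 hs, List.getD_eq_getElem w 0 ht] at h
  exact (hw.getElem_inj_iff).1 h

lemma isPin_of_mem_pinSet {w : List ℕ} (hw : w.Nodup) {x : ℕ} (hx : x ∈ pinSet w)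
    {s : ℕ} (hs : s < w.length) (h : w.getD s 0 = x) : IsPin w s := by
  rcases mem_pinSet.1 hx with ⟨t, ht, hval⟩
  have hlt : t < w.length := by have := ht.2.1; omega
  have : t = s := getD_inj hw hlt hs (by rw [hval, h])
  subst this; exact ht

lemma isPin_cons_succ {a : ℕ} {w : List ℕ} {s : ℕ} (hs : 0 < s) :
    IsPin (a :: w) (s + 1) ↔ IsPin w s := by
  obtain ⟨s, rfl⟩ : ∃ s', s = s' + 1 := ⟨s - 1, by omega⟩
  simp only [IsPin, List.getD_cons_succ, List.length_cons, Nat.add_sub_cancel]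
  rw [show s + 1 + 1 = s + 2 from rfl]
  omega

lemma isPin_not_adjacent {w : List ℕ} {t : ℕ} (h : IsPin w t) : ¬IsPin w (t + 1) := by
  intro h'
  have h1 := h.2.2.2
  have h2 := h'.2.1
  have h3 := h'.2.2.1
  rw [Nat.add_sub_cancel] at h3
  omega

lemma pinSet_cons_of_gt {a : ℕ} {w : List ℕ} (hne : w ≠ []) (h : w.getD 0 0 < a) :
    pinSet (a :: w) = pinSet w := by
  ext x
  simp only [mem_pinSet]
  constructor
  · rintro ⟨t, ht, rfl⟩
    have h1 : 0 < t := ht.1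
    rcases Nat.lt_or_ge t 2 with h2 | h2
    · have ht1 : t = 1 := by omega
      subst ht1
      exact absurd ht.2.2.1 (by simpa using Nat.not_lt.2 (le_of_lt h))
    · obtain ⟨s, rfl⟩ : ∃ s, t = s + 1 := ⟨t - 1, by omega⟩
      exact ⟨s, (isPin_cons_succ (by omega)).1 ht, by simp [List.getD_cons_succ]⟩
  · rintro ⟨s, hs, rfl⟩
    exact ⟨s + 1, (isPin_cons_succ hs.1).2 hs, by simp [List.getD_cons_succ]⟩

lemma pinSet_append_desc : ∀ {l : List ℕ} {v : List ℕ}, v ≠ [] → l.Pairwise (· > ·) →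
    (∀ a ∈ l, v.getD 0 0 < a) → pinSet (l ++ v) = pinSet v := by
  intro l
  induction l with
  | nil => intro v hv _ _; simp
  | cons a l ih =>
    intro v hv hl hgt
    have hne : l ++ v ≠ [] := by simp [hv]
    have hhead : (l ++ v).getD 0 0 < a := by
      cases l with
      | nil => simpa using hgt a (by simp)
      | cons b l' => simpa using (List.pairwise_cons.1 hl).1 b (by simp)
    rw [List.cons_append, pinSet_cons_of_gt hne hhead,
      ih hv (List.Pairwise.of_cons hl) (fun b hb => hgt b (List.mem_cons_of_mem a hb))]

lemma pinPos_nodup (w : List ℕ) : (pinPos w).Nodup :=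
  List.nodup_range.filter _

lemma card_pinSet_eq {w : List ℕ} (hw : w.Nodup) :
    (pinPos w).toFinset.card = (pinSet w).card := by
  rw [List.toFinset_card_of_nodup (pinPos_nodup w), pinSet_eq_map,
    List.toFinset_card_of_nodup, List.length_map]
  refine (List.Nodup.map_on ?_ (pinPos_nodup w))
  intro x hx y hy hxy
  have hx' := (mem_pinPos.1 hx).2.1
  have hy' := (mem_pinPos.1 hy).2.1
  exact getD_inj hw (by omega) (by omega) hxy

/-! ### Packing lemma for pinnacle positions -/

lemma packing : ∀ (k : ℕ) (a b : ℕ) (T : Finset ℕ), T.card = k + 1 →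
    (∀ t ∈ T, a ≤ t ∧ t ≤ b) → (∀ t ∈ T, t + 1 ∉ T) → a + 2 * k ≤ b := by
  intro k
  induction k with
  | zero =>
    intro a b T hcard hab _
    obtain ⟨t, ht⟩ := Finset.card_pos.1 (by omega : 0 < T.card)
    have := hab t ht; omega
  | succ k ih =>
    intro a b T hcard hab hadj
    have hne : T.Nonempty := Finset.card_pos.1 (by omega)
    set m := T.min' hne with hm
    have hmT : m ∈ T := T.min'_mem hne
    have h1 : (T.erase m).card = k + 1 := by rw [Finset.card_erase_of_mem hmT]; omega
    have h2 : ∀ t ∈ T.erase m, m + 2 ≤ t ∧ t ≤ b := by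
      intro t ht
      have htT := Finset.mem_of_mem_erase ht
      have hge : m ≤ t := T.min'_le t htT
      have hne' : t ≠ m := Finset.ne_of_mem_erase ht
      have : t ≠ m + 1 := by rintro rfl; exact hadj m hmT htT
      exact ⟨by omega, (hab t htT).2⟩
    have h3 : ∀ t ∈ T.erase m, t + 1 ∉ T.erase m := by
      intro t ht h
      exact hadj t (Finset.mem_of_mem_erase ht) (Finset.mem_of_mem_erase h)
    have := ih (m + 2) b (T.erase m) h1 h2 h3
    have := (hab m hmT).1
    omega

/-! ### The matching lemma -/

lemma matching : ∀ (k : ℕ) (C N : Finset ℕ), C.card = k → N.card = C.card →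
    (∀ c ∈ C, c ∉ N → ∀ n' ∈ N, n' < c) →
    ∃ g : ℕ → ℕ, Set.BijOn g ↑C ↑N ∧ ∀ c ∈ C, g c ≤ c := by
  intro k
  induction k with
  | zero =>
    intro C N hC hN _
    rw [Finset.card_eq_zero] at hC; subst hC
    simp only [Finset.card_empty, Finset.card_eq_zero] at hN; subst hN
    exact ⟨id, by simp [Set.bijOn_id], by simp⟩
  | succ k ih =>
    intro C N hC hN hyp
    have hCne : C.Nonempty := Finset.card_pos.1 (by omega)
    have hNne : N.Nonempty := Finset.card_pos.1 (by omega)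
    set MC := C.max' hCne with hMC
    set MN := N.max' hNne with hMN
    have hMCC : MC ∈ C := C.max'_mem hCne
    have hMNN : MN ∈ N := N.max'_mem hNne
    have hle : MN ≤ MC := by
      by_contra hlt
      push_neg at hlt
      have hsub : C ⊆ N.erase MN := by
        intro c hc
        have hcN : c ∈ N := by
          by_contra hcn
          exact absurd (hyp c hc hcn MN hMNN) (by have := C.le_max' c hc; omega)
        refine Finset.mem_erase.2 ⟨?_, hcN⟩
        have := C.le_max' c hc; omega
      have := Finset.card_le_card hsub
      rw [Finset.card_erase_of_mem hMNN] at this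
      omega
    have hC' : (C.erase MC).card = k := by rw [Finset.card_erase_of_mem hMCC]; omega
    have hN' : (N.erase MN).card = (C.erase MC).card := by
      rw [Finset.card_erase_of_mem hMNN, Finset.card_erase_of_mem hMCC]; omega
    have hyp' : ∀ c ∈ C.erase MC, c ∉ N.erase MN → ∀ n' ∈ N.erase MN, n' < c := by
      intro c hc hcn n' hn'
      have hcC := Finset.mem_of_mem_erase hc
      have hn'N := Finset.mem_of_mem_erase hn'
      by_cases hcN : c ∈ N
      · have : c = MN := by
          by_contra hne
          exact hcn (Finset.mem_erase.2 ⟨hne, hcN⟩)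
        subst this
        have h1 := N.le_max' n' hn'N
        have h2 := Finset.ne_of_mem_erase hn'
        omega
      · exact hyp c hcC hcN n' hn'N
    obtain ⟨g, hg, hgle⟩ := ih (C.erase MC) (N.erase MN) hC' hN' hyp'
    refine ⟨fun x => if x = MC then MN else g x, ?_, ?_⟩
    · constructor
      · intro c hc
        simp only [Finset.mem_coe] at hc ⊢
        by_cases h : c = MC
        · simp [h, hMNN]
        · simp only [if_neg h]
          exact Finset.mem_of_mem_erase (hg.1 (by simp [Finset.mem_erase, h, hc]))
      constructor
      · intro c hc c' hc' hgg
        dsimp only at hgg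
        simp only [Finset.mem_coe] at hc hc'
        by_cases h : c = MC <;> by_cases h' : c' = MC
        · rw [h, h']
        · exfalso
          rw [if_pos h, if_neg h'] at hgg
          have : g c' ∈ (N.erase MN : Finset ℕ) := hg.1 (by simp [Finset.mem_erase, h', hc'])
          rw [← hgg] at this
          exact (Finset.ne_of_mem_erase this) rfl
        · exfalso
          rw [if_neg h, if_pos h'] at hgg
          have : g c ∈ (N.erase MN : Finset ℕ) := hg.1 (by simp [Finset.mem_erase, h, hc])
          rw [hgg] at this
          exact (Finset.ne_of_mem_erase this) rfl
        · rw [if_neg h, if_neg h'] at hgg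
          exact hg.2.1 (by simp [Finset.mem_erase, h, hc]) (by simp [Finset.mem_erase, h', hc']) hgg
      · intro y hy
        simp only [Finset.mem_coe] at hy
        by_cases h : y = MN
        · exact ⟨MC, by simpa using hMCC, by simp [h]⟩
        · have hy' : y ∈ (↑(N.erase MN) : Set ℕ) := by
            simp [Finset.mem_erase, h, hy]
          obtain ⟨c, hc, hgc⟩ := hg.2.2 hy'
          simp only [Finset.mem_coe, Finset.mem_erase] at hc
          refine ⟨c, by simpa using hc.2, ?_⟩
          dsimp only
          rw [if_neg hc.1]; exact hgc
    · intro c hc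
      dsimp only
      by_cases h : c = MC
      · rw [if_pos h, h]; exact hle
      · simp only [if_neg h]
        exact hgle c (Finset.mem_erase.2 ⟨h, hc⟩)

/-! ### The decomposition lemma -/

def Slots (c ω : List ℕ) : Prop :=
  ∀ i < ω.length, c.getD i 0 < ω.getD i 0 ∧ c.getD (i + 1) 0 < ω.getD i 0

lemma decomp : ∀ (L : ℕ) (w : List ℕ), w.length ≤ L → w ≠ [] → w.Nodup →
    ∃ c : List ℕ, c.Nodup ∧ c.length = (ordIn (pinSet w) w).length + 1 ∧
      (∀ x ∈ c, x ∈ w ∧ x ∉ pinSet w) ∧ Slots c (ordIn (pinSet w) w) ∧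
      c.getD 0 0 ≤ w.getD 0 0 := by
  intro L
  induction L with
  | zero =>
    intro w hL hne _
    exact absurd (List.length_pos_iff.2 hne) (by omega)
  | succ L ih =>
    intro w hL hne hw
    by_cases hpin : pinSet w = ∅
    · have hord : ordIn (pinSet w) w = [] := by
        rw [hpin]; simp [ordIn]
      refine ⟨[w.getD 0 0], by simp, by simp [hord], ?_, ?_, le_refl _⟩
      · intro x hx
        simp only [List.mem_singleton] at hx
        subst hx
        constructor
        · rw [List.getD_eq_getElem w 0 (List.length_pos_iff.2 hne)]
          exact List.getElem_mem _
        · rw [hpin]; simp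
      · intro i hi; rw [hord] at hi; simp at hi
    · have hex : ∃ t, IsPin w t := by
        obtain ⟨x, hx⟩ := Finset.nonempty_iff_ne_empty.2 hpin
        obtain ⟨t, ht, _⟩ := mem_pinSet.1 hx
        exact ⟨t, ht⟩
      set t₁ := Nat.find hex with ht₁def
      have ht₁ : IsPin w t₁ := Nat.find_spec hex
      have hmin : ∀ s < t₁, ¬IsPin w s := fun s hs => Nat.find_min hex hs
      have ht₁pos : 0 < t₁ := ht₁.1
      have hlen : t₁ + 1 < w.length := ht₁.2.1
      set A := w.take t₁ with hA
      set B := w.drop (t₁ + 1) with hB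
      set p := w.getD t₁ 0 with hp
      have hAlen : A.length = t₁ := by
        rw [hA, List.length_take]; omega
      have hBlen : B.length = w.length - (t₁ + 1) := by
        rw [hB, List.length_drop]
      have hsplit : w = A ++ p :: B := by
        conv_lhs => rw [← List.take_append_drop t₁ w]
        congr 1
        rw [List.drop_eq_getElem_cons (by omega : t₁ < w.length)]
        congr 1
        rw [hp, List.getD_eq_getElem w 0 (by omega : t₁ < w.length)]
      have hgB : ∀ s, B.getD s 0 = w.getD (t₁ + 1 + s) 0 := by
        intro s
        by_cases hs : s < B.length
        · rw [List.getD_eq_getElem B 0 hs, List.getD_eq_getElem w 0 (by omega)]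
          simp [hB, List.getElem_drop]
        · rw [List.getD_eq_default B 0 (by omega), List.getD_eq_default w 0 (by omega)]
      have hgA : ∀ j, j < t₁ → A.getD j 0 = w.getD j 0 := by
        intro j hj
        rw [List.getD_eq_getElem A 0 (show j < A.length by omega),
          List.getD_eq_getElem w 0 (show j < w.length by omega)]
        exact List.getElem_take
      have claim1 : ∀ s, 0 < s → (IsPin B s ↔ IsPin w (t₁ + 1 + s)) := by
        intro s hs
        unfold IsPin
        rw [hgB, hgB, hgB,
          show t₁ + 1 + (s - 1) = t₁ + 1 + s - 1 by omega,
          show t₁ + 1 + (s + 1) = t₁ + 1 + s + 1 by omega, hBlen]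
        omega
      have hwnodup := hw
      rw [hsplit] at hwnodup
      have hnodups := List.nodup_append.1 hwnodup
      have hAnodup : A.Nodup := hnodups.1
      have hpBnodup : (p :: B).Nodup := hnodups.2.1
      have hdisj : A.Disjoint (p :: B) := by
          intro a ha hb; exact hnodups.2.2 a ha a hb rfl
      have hBnodup : B.Nodup := (List.nodup_cons.1 hpBnodup).2
      have hpB : p ∉ B := (List.nodup_cons.1 hpBnodup).1
      have hpmem : p ∈ pinSet w := mem_pinSet.2 ⟨t₁, ht₁, rfl⟩
      have hPinB : pinSet B = (pinSet w).erase p := by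
        ext x
        simp only [Finset.mem_erase]
        constructor
        · intro hx
          obtain ⟨s, hs, rfl⟩ := mem_pinSet.1 hx
          have hs1 : 0 < s := hs.1
          have hsw : IsPin w (t₁ + 1 + s) := (claim1 s hs1).1 hs
          refine ⟨?_, mem_pinSet.2 ⟨t₁ + 1 + s, hsw, (hgB s).symm⟩⟩
          rw [hgB s]
          intro heq
          have := getD_inj hw (by have := hsw.2.1; omega) (by omega) (heq.trans hp)
          omega
        · rintro ⟨hxp, hx⟩
          obtain ⟨t, ht, rfl⟩ := mem_pinSet.1 hx
          have htne : t ≠ t₁ := fun h => hxp (by rw [h])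
          have htge : t₁ ≤ t := by
            by_contra h
            exact hmin t (by omega) ht
          have htne1 : t ≠ t₁ + 1 := by
            intro h
            subst h
            have h1 := ht₁.2.2.2
            have h2 := ht.2.2.1
            rw [Nat.add_sub_cancel] at h2
            omega
          have hge2 : t₁ + 2 ≤ t := by omega
          refine mem_pinSet.2 ⟨t - (t₁ + 1), ?_, ?_⟩
          · rw [claim1 _ (by omega), show t₁ + 1 + (t - (t₁ + 1)) = t by omega]
            exact ht
          · rw [hgB, show t₁ + 1 + (t - (t₁ + 1)) = t by omega]
      have hAnotP : ∀ x ∈ A, x ∉ pinSet w := by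
        intro x hxA hxP
        obtain ⟨j, hj, hjx⟩ := List.mem_iff_getElem.1 hxA
        have hjt : j < t₁ := by omega
        have : IsPin w j := by
          refine isPin_of_mem_pinSet hw hxP (by omega) ?_
          rw [List.getD_eq_getElem w 0 (show j < w.length by omega), ← hjx]
          exact (List.getElem_take).symm
        exact hmin j hjt this
      have hBsub : ∀ x ∈ B, x ∈ pinSet w ↔ x ∈ pinSet B := by
        intro x hxB
        rw [hPinB, Finset.mem_erase]
        have : x ≠ p := fun h => hpB (h ▸ hxB)
        tauto
      have hω : ordIn (pinSet w) w = p :: ordIn (pinSet B) B := by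
        have hrw : ordIn (pinSet w) w = ordIn (pinSet w) (A ++ p :: B) := by
          rw [← hsplit]
        rw [hrw, ordIn, List.filter_append, List.filter_cons]
        have h1 : A.filter (fun x => decide (x ∈ pinSet w)) = [] := by
          rw [List.filter_eq_nil_iff]
          intro x hx
          simpa using hAnotP x hx
        have h2 : (decide (p ∈ pinSet w)) = true := by simpa using hpmem
        rw [h1]
        simp only [h2, if_true, List.nil_append]
        congr 1
        rw [ordIn]
        apply List.filter_congr
        intro x hx
        simpa using hBsub x hx
      have hBne : B ≠ [] := by
        have : 0 < B.length := by omega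
        exact List.length_pos_iff.1 this
      obtain ⟨c', hc'nodup, hc'len, hc'mem, hc'slots, hc'head⟩ :=
        ih B (by omega) hBne hBnodup
      have hAne : A.toFinset.Nonempty := by
        rw [List.toFinset_nonempty_iff]
        exact fun h => by simp [h] at hAlen; omega
      set m := A.toFinset.min' hAne with hm
      have hmA : m ∈ A := List.mem_toFinset.1 (A.toFinset.min'_mem hAne)
      have hmle : ∀ a ∈ A, m ≤ a := fun a ha => A.toFinset.min'_le a (List.mem_toFinset.2 ha)
      refine ⟨m :: c', ?_, ?_, ?_, ?_, ?_⟩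
      · rw [List.nodup_cons]
        refine ⟨?_, hc'nodup⟩
        intro hmc'
        have hmB : m ∈ B := (hc'mem m hmc').1
        exact hdisj hmA (List.mem_cons_of_mem p hmB)
      · rw [hω]; simp [hc'len]
      · intro x hx
        rcases List.mem_cons.1 hx with rfl | hx'
        · exact ⟨List.mem_of_mem_take hmA, hAnotP _ hmA⟩
        · obtain ⟨hxB, hxnP⟩ := hc'mem x hx'
          refine ⟨List.mem_of_mem_drop hxB, ?_⟩
          intro hxP
          exact hxnP ((hBsub x hxB).1 hxP)
      · intro i hi
        rw [hω] at hi ⊢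
        simp only [List.length_cons] at hi
        match i with
        | 0 =>
          simp only [List.getD_cons_zero, List.getD_cons_succ]
          constructor
          · have h1 : w.getD (t₁ - 1) 0 ∈ A := by
              have : A.getD (t₁ - 1) 0 = w.getD (t₁ - 1) 0 := hgA _ (by omega)
              rw [← this, List.getD_eq_getElem A 0 (by omega)]
              exact List.getElem_mem _
            have h2 := hmle _ h1
            have h3 := ht₁.2.2.1
            omega
          · have h1 : B.getD 0 0 = w.getD (t₁ + 1) 0 := by rw [hgB]
            have h2 := ht₁.2.2.2
            omega
        | Nat.succ j =>
          simp only [List.getD_cons_succ]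
          exact hc'slots j (by omega)
      · simp only [List.getD_cons_zero]
        have h0 : w.getD 0 0 ∈ A := by
          have : A.getD 0 0 = w.getD 0 0 := hgA 0 (by omega)
          rw [← this, List.getD_eq_getElem A 0 (by omega)]
          exact List.getElem_mem _
        exact hmle _ h0

/-! ### Interleaving -/

def interleave : List ℕ → List ℕ → List ℕ
  | [], _ => []
  | a :: as, bs => a :: interleave bs as
termination_by u v => u.length + v.length

lemma interleave_nil (u : List ℕ) : interleave u [] = u.take 1 := by
  cases u with
  | nil => rw [interleave]; rfl
  | cons a as => rw [interleave, interleave]; rfl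

lemma interleave_cons_cons (a b : ℕ) (as bs : List ℕ) :
    interleave (a :: as) (b :: bs) = a :: b :: interleave as bs := by
  rw [interleave, interleave]

lemma pinSet_singleton (a : ℕ) : pinSet [a] = ∅ := by
  ext x
  rw [mem_pinSet]
  simp only [Finset.notMem_empty, iff_false]
  rintro ⟨t, ht, _⟩
  have h1 := ht.1
  have h2 := ht.2.1
  simp only [List.length_singleton] at h2
  omega

lemma pinSet_nil : pinSet [] = ∅ := rfl

lemma pinSet_cons_cons {a b : ℕ} {v : List ℕ} (hv : v ≠ []) (hab : a < b)
    (hvb : v.getD 0 0 < b) : pinSet (a :: b :: v) = insert b (pinSet v) := by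
  have hvlen : 0 < v.length := List.length_pos_iff.2 hv
  ext x
  rw [mem_pinSet, Finset.mem_insert, mem_pinSet]
  constructor
  · rintro ⟨t, ht, rfl⟩
    have h1 := ht.1
    rcases Nat.lt_or_ge t 2 with h2 | h2
    · have : t = 1 := by omega
      subst this
      left; rfl
    · right
      obtain ⟨s, rfl⟩ : ∃ s, t = s + 2 := ⟨t - 2, by omega⟩
      have hb : IsPin (b :: v) (s + 1) := (isPin_cons_succ (by omega)).1 ht
      have hs1 : 0 < s := by
        by_contra h
        have : s = 0 := by omega
        subst this
        have := hb.2.2.1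
        simp only [List.getD_cons_succ, List.getD_cons_zero, Nat.add_sub_cancel] at this
        omega
      have hvpin : IsPin v s := (isPin_cons_succ hs1).1 hb
      exact ⟨s, hvpin, by simp [List.getD_cons_succ]⟩
  · rintro (rfl | ⟨s, hs, rfl⟩)
    · refine ⟨1, ?_, rfl⟩
      refine ⟨by omega, by simp [List.length_cons]; omega, ?_, ?_⟩
      · simpa using hab
      · simpa using hvb
    · refine ⟨s + 2, ?_, by simp [List.getD_cons_succ]⟩
      exact (isPin_cons_succ (by omega)).2 ((isPin_cons_succ hs.1).2 hs)

lemma slots_tail {a b : ℕ} {as bs : List ℕ} (h : Slots (a :: as) (b :: bs)) :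
    Slots as bs := by
  intro i hi
  have := h (i + 1) (by simpa using Nat.succ_lt_succ hi)
  simpa [List.getD_cons_succ] using this

lemma pinSet_interleave : ∀ (ω d : List ℕ), d.length = ω.length + 1 → Slots d ω →
    pinSet (interleave d ω) = ω.toFinset := by
  intro ω
  induction ω with
  | nil =>
    intro d hlen _
    match d with
    | [a] => rw [interleave_nil]; simpa using pinSet_singleton a
  | cons b ω' ih =>
    intro d hlen hslots
    match d with
    | a :: a' :: d'' =>
      rw [interleave_cons_cons]
      have hlen' : (a' :: d'').length = ω'.length + 1 := by simpa using hlen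
      have hne : interleave (a' :: d'') ω' ≠ [] := by
        cases h : interleave (a' :: d'') ω' with
        | nil => rw [interleave] at h; exact absurd h (by simp)
        | cons _ _ => simp
      have hhead : (interleave (a' :: d'') ω').getD 0 0 = a' := by
        rw [interleave]; rfl
      have h0 := hslots 0 (by simp)
      simp only [List.getD_cons_zero, List.getD_cons_succ] at h0
      rw [pinSet_cons_cons hne h0.1 (by rw [hhead]; exact h0.2)]
      rw [ih (a' :: d'') hlen' (slots_tail hslots)]
      simp

lemma ordIn_interleave (S : Finset ℕ) : ∀ (ω d : List ℕ), d.length = ω.length + 1 →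
    (∀ x ∈ d, x ∉ S) → (∀ x ∈ ω, x ∈ S) → ordIn S (interleave d ω) = ω := by
  intro ω
  induction ω with
  | nil =>
    intro d hlen hd _
    match d with
    | [a] =>
      rw [interleave_nil]
      simp only [ordIn, List.take_cons, List.take_nil, List.filter_cons]
      simp [hd a (by simp)]
  | cons b ω' ih =>
    intro d hlen hd hω
    match d with
    | a :: a' :: d'' =>
      rw [interleave_cons_cons, ordIn, List.filter_cons, List.filter_cons]
      simp only [hd a (by simp), decide_eq_true_eq, if_false,
        hω b (by simp), if_true]
      congr 1
      exact ih (a' :: d'') (by simpa using hlen) (fun x hx => hd x (by simp [hx]))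
        (fun x hx => hω x (by simp [hx]))

lemma interleave_perm : ∀ (ω d : List ℕ), d.length = ω.length + 1 →
    (interleave d ω).Perm (d ++ ω) := by
  intro ω
  induction ω with
  | nil =>
    intro d hlen
    match d with
    | [a] => rw [interleave_nil]; simp
  | cons b ω' ih =>
    intro d hlen
    match d with
    | a :: a' :: d'' =>
      rw [interleave_cons_cons]
      have h1 := ih (a' :: d'') (by simpa using hlen)
      refine (List.Perm.cons a (List.Perm.cons b h1)).trans ?_
      simp only [List.cons_append]
      exact List.Perm.cons a ((List.perm_middle (a := b) (l₁ := a' :: d'') (l₂ := ω')).symm)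

lemma toFinset_range' (n : ℕ) : (List.range' 1 n).toFinset = Finset.Icc 1 n := by
  ext x
  simp only [List.mem_toFinset, List.mem_range'_1, Finset.mem_Icc]
  omega

theorem ordering_witness_reduction (n k : ℕ) (P : Finset ℕ)
    (hP : P ⊆ Finset.Icc 1 n) (hk : P.card = k)
    (N : Finset ℕ) (hNcard : N.card = k + 1) (hNpos : ∀ m ∈ N, 1 ≤ m)
    (hNP : ∀ m ∈ N, m ∉ P)
    (hNsmall : ∀ m : ℕ, 1 ≤ m → m ∉ P → m ∉ N → ∀ m' ∈ N, m' < m)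
    (ω : List ℕ) (hω : ω.Nodup) (hωP : ω.toFinset = P) :
    (∃ π : List ℕ, π.Perm (List.range' 1 n) ∧ pinSet π = P ∧ ordIn P π = ω) ↔
      (∃ τ : List ℕ, τ.Nodup ∧ τ.toFinset = P ∪ N ∧ pinSet τ = P ∧ ordIn P τ = ω) := by
  have hωlen : ω.length = k := by
    rw [← List.toFinset_card_of_nodup hω, hωP, hk]
  constructor
  · rintro ⟨π, hperm, hpin, hord⟩
    by_cases hn : n = 0
    · -- n = 0 : π is empty, P = ∅, N = {m}, take τ = [m]
      subst hn
      have hπ : π = [] := by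
        have := hperm.length_eq
        simpa using List.length_eq_zero_iff.1 (by simpa using this)
      subst hπ
      have hP0 : P = ∅ := by rw [← hpin, pinSet_nil]
      have hk0 : k = 0 := by rw [← hk, hP0]; simp
      obtain ⟨m, hm⟩ := Finset.card_eq_one.1 (by rw [hNcard, hk0])
      have hω0 : ω = [] := by
        rw [← List.toFinset_eq_empty_iff, hωP, hP0]
      refine ⟨[m], by simp, ?_, ?_, ?_⟩
      · rw [hm, hP0]; simp
      · rw [pinSet_singleton, hP0]
      · rw [hω0]; simp [ordIn, hP0]
    · -- main forward direction
      have hπnd : π.Nodup := hperm.nodup_iff.2 (List.nodup_range' (s := _) (n := _))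
      have hπlen : π.length = n := by simpa using hperm.length_eq
      have hπne : π ≠ [] := by
        intro h; rw [h] at hπlen; simp at hπlen; omega
      have hπmem : ∀ x ∈ π, 1 ≤ x := by
        intro x hx
        exact (List.mem_range'_1.1 (hperm.mem_iff.1 hx)).1
      obtain ⟨c, hcnd, hclen, hcmem, hcslots, _⟩ := decomp π.length π le_rfl hπne hπnd
      rw [hpin] at hclen hcslots hcmem
      rw [hord] at hclen hcslots
      have hclen' : c.length = k + 1 := by rw [hclen, hωlen]
      set C := c.toFinset with hC
      have hCcard : C.card = k + 1 := by rw [hC, List.toFinset_card_of_nodup hcnd, hclen']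
      have hyp : ∀ x ∈ C, x ∉ N → ∀ n' ∈ N, n' < x := by
        intro x hx hxn
        have hxc : x ∈ c := List.mem_toFinset.1 hx
        obtain ⟨hxπ, hxP⟩ := hcmem x hxc
        exact hNsmall x (hπmem x hxπ) hxP hxn
      obtain ⟨g, hbij, hgle⟩ := matching (k + 1) C N hCcard (by rw [hNcard, hCcard]) hyp
      set d := c.map g with hd
      have hdlen : d.length = k + 1 := by rw [hd, List.length_map, hclen']
      have hdN : ∀ x ∈ d, x ∈ N := by
        intro x hx
        obtain ⟨y, hy, rfl⟩ := List.mem_map.1 hx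
        have : y ∈ (↑C : Set ℕ) := Finset.mem_coe.2 (List.mem_toFinset.2 hy)
        exact Finset.mem_coe.1 (hbij.1 this)
      have hgd : ∀ i, i < c.length → d.getD i 0 = g (c.getD i 0) := by
        intro i hi
        rw [List.getD_eq_getElem d 0 (show i < d.length by rw [hd, List.length_map]; omega),
          List.getD_eq_getElem c 0 hi]
        simp [hd]
      have hcC : ∀ i, i < c.length → c.getD i 0 ∈ C := by
        intro i hi
        rw [List.getD_eq_getElem c 0 hi]
        exact List.mem_toFinset.2 (List.getElem_mem _)
      have hslots : Slots d ω := by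
        intro i hi
        have hi' : i < c.length := by omega
        have hi'' : i + 1 < c.length := by rw [hclen]; omega
        have h1 := hcslots i hi
        have e1 : d.getD i 0 ≤ c.getD i 0 := by
          rw [hgd i hi']; exact hgle _ (hcC i hi')
        have e2 : d.getD (i + 1) 0 ≤ c.getD (i + 1) 0 := by
          rw [hgd _ hi'']; exact hgle _ (hcC _ hi'')
        exact ⟨by omega, by omega⟩
      have hlen2 : d.length = ω.length + 1 := by rw [hdlen, hωlen]
      have hperm2 := interleave_perm ω d hlen2
      have hdnd : d.Nodup := by
        refine List.Nodup.map_on ?_ hcnd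
        intro x hx y hy hxy
        exact hbij.2.1 (Finset.mem_coe.2 (List.mem_toFinset.2 hx))
          (Finset.mem_coe.2 (List.mem_toFinset.2 hy)) hxy
      have hdisj : List.Disjoint d ω := by
        intro x hxd hxω
        exact hNP x (hdN x hxd) (by rw [← hωP]; exact List.mem_toFinset.2 hxω)
      have hτnd : (interleave d ω).Nodup :=
        hperm2.nodup_iff.2 (List.nodup_append.2 ⟨hdnd, hω, fun a ha b hb h => hdisj ha (by rw [h]; exact hb)⟩)
      have hdfin : d.toFinset = N := by
        apply Finset.eq_of_subset_of_card_le
        · intro x hx; exact hdN x (List.mem_toFinset.1 hx)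
        · rw [hNcard, List.toFinset_card_of_nodup hdnd, hdlen]
      refine ⟨interleave d ω, hτnd, ?_, ?_, ?_⟩
      · rw [List.toFinset_eq_of_perm _ _ hperm2, List.toFinset_append, hdfin, hωP, Finset.union_comm]
      · rw [pinSet_interleave ω d hlen2 hslots, hωP]
      · exact ordIn_interleave P ω d hlen2 (fun x hx => hNP x (hdN x hx))
          (fun x hx => by rw [← hωP]; exact List.mem_toFinset.2 hx)
  · rintro ⟨τ, hτnd, hτfin, hτpin, hτord⟩
    by_cases hn : n = 0
    · subst hn
      have hP0 : P = ∅ := by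
        have hIcc : Finset.Icc 1 0 = ∅ := by simp
        exact Finset.subset_empty.1 (hIcc ▸ hP)
      have hω0 : ω = [] := by rw [← List.toFinset_eq_empty_iff, hωP, hP0]
      refine ⟨[], ?_, ?_, ?_⟩
      · rw [List.range'_zero]
      · rw [pinSet_nil, hP0]
      · rw [hω0]; rfl
    · -- main backward direction
      have hPNdisj : Disjoint P N := Finset.disjoint_left.2 (fun {x} hxP hxN => hNP x hxN hxP)
      have hcardU : (P ∪ N).card = 2 * k + 1 := by
        rw [Finset.card_union_of_disjoint hPNdisj, hk, hNcard]; ring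
      have hτlen : τ.length = 2 * k + 1 := by
        rw [← List.toFinset_card_of_nodup hτnd, hτfin, hcardU]
      have hNsub : N ⊆ Finset.Icc 1 n := by
        by_cases hk0 : k = 0
        · subst hk0
          obtain ⟨m, hm⟩ := Finset.card_eq_one.1 hNcard
          have hm1 : m = 1 := by
            by_contra hne1
            have hP0 : P = ∅ := Finset.card_eq_zero.1 hk
            have h1P : (1:ℕ) ∉ P := by rw [hP0]; simp
            have h1N : (1:ℕ) ∉ N := by
              rw [hm]; simp; omega
            have := hNsmall 1 le_rfl h1P h1N m (by rw [hm]; simp)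
            have := hNpos m (by rw [hm]; simp)
            omega
          rw [hm, hm1]
          intro x hx
          simp only [Finset.mem_singleton] at hx
          subst hx
          rw [Finset.mem_Icc]
          omega
        · -- k ≥ 1 : the maximum of P ∪ N lies in P
          have hUne : (P ∪ N).Nonempty := Finset.card_pos.1 (by omega)
          set M := (P ∪ N).max' hUne with hM
          have hMmem : M ∈ P ∪ N := Finset.max'_mem _ _
          have hMle : ∀ x ∈ P ∪ N, x ≤ M := fun x hx => Finset.le_max' _ x hx
          have hMP : M ∈ P := by
            by_contra hMP
            have hMτ : M ∈ τ := List.mem_toFinset.1 (by rw [hτfin]; exact hMmem)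
            obtain ⟨s, hs, hsM⟩ := List.getElem_of_mem hMτ
            have hτle : ∀ j, (hj : j < τ.length) → τ[j] ≤ M := by
              intro j hj
              exact hMle _ (by rw [← hτfin]; exact List.mem_toFinset.2 (List.getElem_mem _))
            have hτlt : ∀ j, (hj : j < τ.length) → j ≠ s → τ[j] < M := by
              intro j hj hjs
              rcases lt_or_eq_of_le (hτle j hj) with h | h
              · exact h
              · exact absurd ((hτnd.getElem_inj_iff).1 (by rw [h, ← hsM])) hjs
            by_cases hint : 0 < s ∧ s + 1 < τ.length
            · -- interior: M would be a pinnacle, so M ∈ P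
              have hpin' : IsPin τ s := by
                refine ⟨hint.1, hint.2, ?_, ?_⟩
                · rw [List.getD_eq_getElem τ 0 (show s - 1 < τ.length by omega),
                    List.getD_eq_getElem τ 0 (show s < τ.length by omega), hsM]
                  exact hτlt _ _ (by omega)
                · rw [List.getD_eq_getElem τ 0 (show s + 1 < τ.length by omega),
                    List.getD_eq_getElem τ 0 (show s < τ.length by omega), hsM]
                  exact hτlt _ _ (by omega)
              exact hMP (by rw [← hτpin]; exact mem_pinSet.2 ⟨s, hpin',
                by rw [List.getD_eq_getElem τ 0 (show s < τ.length by omega), hsM]⟩)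
            · -- boundary: packing contradiction
              set T := (pinPos τ).toFinset with hT
              have hTcard : T.card = k := by rw [hT, card_pinSet_eq hτnd, hτpin, hk]
              have hTmem : ∀ t ∈ T, IsPin τ t :=
                fun t ht => mem_pinPos.1 (List.mem_toFinset.1 ht)
              have hTadj : ∀ t ∈ T, t + 1 ∉ T := by
                intro t ht h'
                exact isPin_not_adjacent (hTmem t ht) (hTmem _ h')
              push_neg at hint
              by_cases hs0 : s = 0
              · subst hs0
                have hT1 : ∀ t ∈ T, 2 ≤ t ∧ t ≤ 2 * k - 1 := by
                  intro t ht
                  have hp' := hTmem t ht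
                  have h2 : t + 1 < τ.length := hp'.2.1
                  constructor
                  · have h1 : 0 < t := hp'.1
                    by_cases he : t = 1
                    · exfalso
                      have h3 := hp'.2.2.1
                      rw [he] at h3
                      rw [List.getD_eq_getElem τ 0 (show 1 - 1 < τ.length by omega),
                        List.getD_eq_getElem τ 0 (show 1 < τ.length by omega)] at h3
                      have h4 := hτle 1 (by omega)
                      have h5 : τ[(0:ℕ)] = M := hsM
                      simp only [show (1:ℕ) - 1 = 0 from rfl] at h3
                      omega
                    · omega
                  · omega
                have := packing (k - 1) 2 (2 * k - 1) T
                  (by rw [hTcard]; omega) hT1 hTadj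
                omega
              · have hs2k : s = 2 * k := by omega
                have hT1 : ∀ t ∈ T, 1 ≤ t ∧ t ≤ 2 * k - 2 := by
                  intro t ht
                  have hp' := hTmem t ht
                  have h2 : t + 1 < τ.length := hp'.2.1
                  refine ⟨hp'.1, ?_⟩
                  by_cases he : t = 2 * k - 1
                  · exfalso
                    have h3 := hp'.2.2.2
                    rw [List.getD_eq_getElem τ 0 (show t + 1 < τ.length by omega),
                      List.getD_eq_getElem τ 0 (show t < τ.length by omega)] at h3
                    have h4 : t + 1 = s := by omega
                    have h5 : τ[t+1]'(by omega) = M := by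
                      have : τ[t+1]'(by omega) = τ[s]'(by omega) := by
                        congr 1
                      rw [this, hsM]
                    have h6 := hτle t (by omega)
                    omega
                  · omega
                have := packing (k - 1) 1 (2 * k - 2) T
                  (by rw [hTcard]; omega) hT1 hTadj
                omega
          intro m hm
          have h1 := hNpos m hm
          have h2 : m ≤ M := hMle m (Finset.mem_union_right _ hm)
          have h3 : m ≠ M := fun h => hNP m hm (h ▸ hMP)
          have h4 : M ≤ n := (Finset.mem_Icc.1 (hP hMP)).2
          rw [Finset.mem_Icc]
          omega
      -- construction of π from τ
      have hτne : τ ≠ [] := by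
        intro h; rw [h] at hτlen; simp at hτlen
      set R := (Finset.Icc 1 n) \ (P ∪ N) with hR
      set D := (R.sort (· ≤ ·)).reverse with hD
      have hDmem : ∀ x, x ∈ D ↔ x ∈ R := by
        intro x; rw [hD, List.mem_reverse, Finset.mem_sort]
      have hDnd : D.Nodup := by rw [hD, List.nodup_reverse]; exact R.sort_nodup _
      have hDsorted : D.Pairwise (· > ·) := by
        rw [hD, List.pairwise_reverse]
        exact (Finset.sortedLT_sort R).pairwise
      have hτ0N : τ.getD 0 0 ∈ N := by
        have hpos : 0 < τ.length := List.length_pos_iff.2 hτne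
        have h0 : τ.getD 0 0 ∈ τ := by
          rw [List.getD_eq_getElem τ 0 hpos]; exact List.getElem_mem _
        have h1 : τ.getD 0 0 ∈ P ∪ N := by
          rw [← hτfin]; exact List.mem_toFinset.2 h0
        rcases Finset.mem_union.1 h1 with h2 | h2
        · exfalso
          have := isPin_of_mem_pinSet hτnd (by rw [hτpin]; exact h2) hpos rfl
          exact absurd this.1 (lt_irrefl 0)
        · exact h2
      have hgt : ∀ a ∈ D, τ.getD 0 0 < a := by
        intro a ha
        have h1 := (hDmem a).1 ha
        rw [hR, Finset.mem_sdiff, Finset.mem_Icc, Finset.mem_union] at h1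
        push_neg at h1
        exact hNsmall a h1.1.1 h1.2.1 h1.2.2 _ hτ0N
      have hDdisj : List.Disjoint D τ := by
        intro x hxD hxτ
        have h1 := (hDmem x).1 hxD
        rw [hR, Finset.mem_sdiff] at h1
        exact h1.2 (by rw [← hτfin]; exact List.mem_toFinset.2 hxτ)
      have hDfin : D.toFinset = R := by
        ext x; rw [List.mem_toFinset, hDmem]
      refine ⟨D ++ τ, ?_, ?_, ?_⟩
      · apply List.perm_of_nodup_nodup_toFinset_eq
          (List.nodup_append.2 ⟨hDnd, hτnd, fun a ha b hb h => hDdisj ha (by rw [h]; exact hb)⟩) (List.nodup_range' (s := 1) (n := n))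
        rw [List.toFinset_append, toFinset_range', hτfin, hDfin, hR]
        exact Finset.sdiff_union_of_subset (Finset.union_subset hP hNsub)
      · rw [pinSet_append_desc hτne hDsorted hgt, hτpin]
      · rw [ordIn, List.filter_append]
        have hDnil : D.filter (fun x => decide (x ∈ P)) = [] := by
          rw [List.filter_eq_nil_iff]
          intro x hx
          have h1 := (hDmem x).1 hx
          rw [hR, Finset.mem_sdiff, Finset.mem_union] at h1
          simp only [decide_eq_true_eq]
          exact fun h => h1.2 (Or.inl h)
        rw [hDnil, List.nil_append]
        exact hτord
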